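/- arXiv:2109.08351 — 2 statements merged into one kernel-verified Lean document; each statement's English description precedes it below -/
import Mathlib

section
/- Lasso oracle inequality: Under the event (4/(nh))|G'e|_∞ ≤ λ and the compatibility condition — namely, for all δ with |δ_{S^c}|₁ ≤ 3|δ_S|₁ one has |δ_S|₁² ≤ (s/φ²)·(δ'Mδ) where M = (1/(nh))G'G and s = |S| — any Lasso minimizer θ̂ satisfies (1/(nh))|G(θ̂-θ*)|₂² + λ|θ̂-θ*|₁ ≤ 4λ² s/φ², and in particular |θ̂ - θ*|₁ ≤ 4λ s/φ². -/
noncomputable section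
open Matrix BigOperators Finset

def l1 {d : ℕ} (v : Fin d → ℝ) : ℝ := ∑ j, |v j|
def sq2 {m : ℕ} (v : Fin m → ℝ) : ℝ := ∑ i, (v i) ^ 2
def linf {m : ℕ} (v : Fin m → ℝ) : ℝ := ⨆ i, |v i|
def restr {d : ℕ} (S : Finset (Fin d)) (v : Fin d → ℝ) : Fin d → ℝ :=
  fun j => if j ∈ S then v j else 0

lemma l1_nonneg {d : ℕ} (v : Fin d → ℝ) : 0 ≤ l1 v :=
  Finset.sum_nonneg fun _ _ => abs_nonneg _

lemma sq2_nonneg {m : ℕ} (v : Fin m → ℝ) : 0 ≤ sq2 v :=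
  Finset.sum_nonneg fun _ _ => sq_nonneg _

lemma l1_restr_eq {d : ℕ} (S : Finset (Fin d)) (v : Fin d → ℝ) :
    l1 (restr S v) = ∑ j ∈ S, |v j| := by
  simp [l1, restr, apply_ite abs, Finset.sum_ite_mem]

lemma l1_split {d : ℕ} (S : Finset (Fin d)) (v : Fin d → ℝ) :
    l1 v = l1 (restr S v) + l1 (restr Sᶜ v) := by
  rw [l1_restr_eq, l1_restr_eq, Finset.sum_add_sum_compl]; rfl

lemma abs_le_linf {m : ℕ} (u : Fin m → ℝ) (i : Fin m) : |u i| ≤ linf u := by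
  rw [linf]
  exact le_ciSup (Set.Finite.bddAbove (Set.finite_range fun i => |u i|)) i

lemma dot_le {m : ℕ} (u w : Fin m → ℝ) : u ⬝ᵥ w ≤ linf u * l1 w := by
  rw [dotProduct, l1, Finset.mul_sum]
  apply Finset.sum_le_sum
  intro i _
  calc u i * w i ≤ |u i * w i| := le_abs_self _
    _ = |u i| * |w i| := abs_mul _ _
    _ ≤ linf u * |w i| := mul_le_mul_of_nonneg_right (abs_le_linf u i) (abs_nonneg _)

lemma quad_eq {n d : ℕ} (c : ℝ) (G : Matrix (Fin n) (Fin d) ℝ) (δ : Fin d → ℝ) :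
    δ ⬝ᵥ ((c • (Gᵀ * G)).mulVec δ) = c * sq2 (G.mulVec δ) := by
  rw [Matrix.smul_mulVec, dotProduct_smul, ← Matrix.mulVec_mulVec,
    Matrix.dotProduct_mulVec, Matrix.vecMul_transpose]
  simp [dotProduct, sq2, sq, mul_comm]

lemma dot_transfer {n d : ℕ} (G : Matrix (Fin n) (Fin d) ℝ) (e : Fin n → ℝ) (δ : Fin d → ℝ) :
    e ⬝ᵥ G.mulVec δ = (Gᵀ.mulVec e) ⬝ᵥ δ := by
  rw [Matrix.dotProduct_mulVec, Matrix.mulVec_transpose]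

lemma sq2_sub {m : ℕ} (a b : Fin m → ℝ) :
    sq2 (a - b) = sq2 a - 2 * (a ⬝ᵥ b) + sq2 b := by
  simp only [sq2, dotProduct, Pi.sub_apply, Finset.mul_sum]
  rw [← Finset.sum_sub_distrib, ← Finset.sum_add_distrib]
  exact Finset.sum_congr rfl fun i _ => by ring
set_option maxHeartbeats 1000000 in
theorem stmt4 {n d : ℕ} (hn : 0 < n) (hd : 0 < d) (h : ℝ) (hh : 0 < h)
    (lam φ : ℝ) (hlam : 0 < lam) (hφ : 0 < φ)
    (G : Matrix (Fin n) (Fin d) ℝ) (Y : Fin n → ℝ)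
    (θstar θhat : Fin d → ℝ) (e : Fin n → ℝ) (he : e = Y - G.mulVec θstar)
    (S : Finset (Fin d)) (hS : S = Finset.univ.filter (fun j => θstar j ≠ 0))
    (hmin : ∀ θ : Fin d → ℝ,
      (1 / (n * h)) * sq2 (Y - G.mulVec θhat) + lam * l1 θhat ≤
        (1 / (n * h)) * sq2 (Y - G.mulVec θ) + lam * l1 θ)
    (hevent : (4 / (n * h)) * linf (Gᵀ.mulVec e) ≤ lam)
    (hcompat : ∀ δ : Fin d → ℝ, l1 (restr Sᶜ δ) ≤ 3 * l1 (restr S δ) →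
      (l1 (restr S δ)) ^ 2 ≤ ((S.card : ℝ) / φ ^ 2) *
        (δ ⬝ᵥ ((1 / (n * h)) • (Gᵀ * G)).mulVec δ)) :
    (1 / (n * h)) * sq2 (G.mulVec (θhat - θstar)) + lam * l1 (θhat - θstar) ≤
        4 * lam ^ 2 * (S.card : ℝ) / φ ^ 2 ∧
      l1 (θhat - θstar) ≤ 4 * lam * (S.card : ℝ) / φ ^ 2 := by
  have hN : 0 < (n : ℝ) * h := mul_pos (by exact_mod_cast hn) hh
  set δ : Fin d → ℝ := θhat - θstar with hδ
  set v : Fin n → ℝ := G.mulVec δ with hv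
  set A : ℝ := (1 / ((n : ℝ) * h)) * sq2 v with hA
  have hA0 : 0 ≤ A := mul_nonneg (by positivity) (sq2_nonneg v)
  set L : ℝ := linf (Gᵀ.mulVec e) with hL
  -- rewrite residuals
  have hYh : Y - G.mulVec θhat = e - v := by
    rw [he, hv, hδ, Matrix.mulVec_sub]; abel
  have hYs : Y - G.mulVec θstar = e := he.symm
  -- basic inequality
  have hbasic := hmin θstar
  rw [hYh, hYs, sq2_sub] at hbasic
  -- bound on the cross term
  have hevent' : 4 * L ≤ lam * ((n : ℝ) * h) := by
    rw [div_mul_eq_mul_div, div_le_iff₀ hN] at hevent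
    exact hevent
  have hdot : e ⬝ᵥ v ≤ L * l1 δ := by
    rw [hv, dot_transfer]; exact dot_le _ _
  have hcross : (1 / ((n : ℝ) * h)) * (2 * (e ⬝ᵥ v)) ≤ lam / 2 * l1 δ := by
    rw [div_mul_eq_mul_div, div_le_iff₀ hN]
    nlinarith [hdot, hevent', l1_nonneg δ, hN,
      mul_nonneg (l1_nonneg δ) (sub_nonneg.mpr hevent')]
  have hexpand : (1 / ((n : ℝ) * h)) * (sq2 e - 2 * (e ⬝ᵥ v) + sq2 v) =
      (1 / ((n : ℝ) * h)) * sq2 e - (1 / ((n : ℝ) * h)) * (2 * (e ⬝ᵥ v)) + A := by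
    rw [hA]; ring
  have hbasic2 : A + lam * l1 θhat ≤ lam / 2 * l1 δ + lam * l1 θstar := by
    rw [hexpand] at hbasic; linarith
  -- l1 decompositions
  set a : ℝ := l1 (restr S δ) with ha
  set b : ℝ := l1 (restr Sᶜ δ) with hb
  have ha0 : 0 ≤ a := l1_nonneg _
  have hb0 : 0 ≤ b := l1_nonneg _
  have hab : l1 δ = a + b := l1_split S δ
  have hsupp : ∀ j ∉ S, θstar j = 0 := by
    intro j hj
    by_contra hne
    exact hj (hS ▸ Finset.mem_filter.mpr ⟨Finset.mem_univ j, hne⟩)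
  have hstar1 : l1 θstar = ∑ j ∈ S, |θstar j| := by
    rw [l1]
    exact (Finset.sum_subset (Finset.subset_univ S)
      (fun j _ hj => by rw [hsupp j hj, abs_zero])).symm
  have hhat1 : l1 θhat = ∑ j ∈ S, |θhat j| + b := by
    rw [l1, ← Finset.sum_add_sum_compl S]
    congr 1
    rw [hb, l1_restr_eq]
    refine Finset.sum_congr rfl fun j hj => ?_
    have h0 : θstar j = 0 := hsupp j (Finset.mem_compl.mp hj)
    simp [hδ, h0]
  have hkey : l1 θstar - l1 θhat ≤ a - b := by
    have hsum : ∑ j ∈ S, |θstar j| - ∑ j ∈ S, |θhat j| ≤ ∑ j ∈ S, |δ j| := by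
      rw [← Finset.sum_sub_distrib]
      refine Finset.sum_le_sum fun j _ => ?_
      have := abs_sub_abs_le_abs_sub (θstar j) (θhat j)
      have h2 : |θstar j - θhat j| = |δ j| := by rw [hδ]; simp [abs_sub_comm]
      linarith [h2 ▸ this]
    rw [hstar1, hhat1, ha, l1_restr_eq]
    linarith
  have hkey' : lam * (l1 θstar - l1 θhat) ≤ lam * (a - b) :=
    mul_le_mul_of_nonneg_left hkey hlam.le
  have hmain : 2 * A + lam * (a + b) ≤ 4 * lam * a := by
    rw [hab] at hbasic2; nlinarith [hbasic2, hkey']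
  -- cone condition
  have hcone : b ≤ 3 * a := by
    have h3 : lam * b ≤ lam * (3 * a) := by nlinarith
    exact le_of_mul_le_mul_left h3 hlam
  -- compatibility
  have hcda : a ^ 2 ≤ ((S.card : ℝ) / φ ^ 2) * A := by
    have := hcompat δ (by rw [← ha, ← hb]; exact hcone)
    rw [quad_eq] at this
    rw [ha, hA, hv]
    exact this
  set c : ℝ := (S.card : ℝ) / φ ^ 2 with hc
  have hc0 : 0 ≤ c := by positivity
  have hamgm : 4 * lam * a ≤ A + 4 * lam ^ 2 * c := by
    rcases hA0.eq_or_lt with hA0' | hApos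
    · have ha0' : a = 0 := by
        rw [← hA0', mul_zero] at hcda
        nlinarith [hcda, ha0]
      have hpc : 0 ≤ 4 * lam ^ 2 * c := by positivity
      rw [ha0', ← hA0']
      linarith
    · nlinarith [sq_nonneg (A - 2 * lam * a),
        mul_nonneg (by positivity : (0:ℝ) ≤ 4 * lam ^ 2) (sub_nonneg.mpr hcda), hApos]
  have hBeq : 4 * lam ^ 2 * (S.card : ℝ) / φ ^ 2 = 4 * lam ^ 2 * c := by
    rw [hc]; ring
  constructor
  · rw [hBeq, hab]; linarith
  · have hfin : lam * l1 δ ≤ lam * (4 * lam * (S.card : ℝ) / φ ^ 2) := by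
      have : lam * (4 * lam * (S.card : ℝ) / φ ^ 2) = 4 * lam ^ 2 * c := by
        rw [hc]; ring
      rw [this, hab]; linarith
    exact le_of_mul_le_mul_left hfin hlam
end
end

section
/- Post-selection deviation bound: Let θ̄ minimize θ ↦ (1/(nh))|Y - G_S θ|₂² over ℝ^{|S|} (least squares on selected columns), and let θ̃ ∈ ℝ^{|S|} satisfy the KKT-type bound (2/(nh))|(Y - G_S θ̃)' G_S|_∞ ≤ λ. If the minimum eigenvalue μ of (1/(nh))G_S'G_S is positive, then |θ̄ - θ̃|₁ ≤ μ⁻¹ λ |S|. -/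
noncomputable section
open Matrix BigOperators Finset

lemma quad_zero (b c : ℝ) (hc : 0 ≤ c) (H : ∀ t : ℝ, 0 ≤ c * t ^ 2 - 2 * b * t) : b = 0 := by
  have hc1 : (0:ℝ) < c + 1 := by linarith
  have H1 := H (b / (c + 1))
  have hne : c + 1 ≠ 0 := ne_of_gt hc1
  have h2 : 0 ≤ (c * (b / (c + 1)) ^ 2 - 2 * b * (b / (c + 1))) * (c + 1) ^ 2 :=
    mul_nonneg H1 (sq_nonneg _)
  have e : (c * (b / (c + 1)) ^ 2 - 2 * b * (b / (c + 1))) * (c + 1) ^ 2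
      = -(c + 2) * b ^ 2 := by field_simp; ring
  rw [e] at h2
  have hb2 : b ^ 2 = 0 := by nlinarith [sq_nonneg b]
  exact pow_eq_zero_iff two_ne_zero |>.mp hb2

lemma rayleigh_lower {s : ℕ} [Nonempty (Fin s)] (A : Matrix (Fin s) (Fin s) ℝ)
    (hA : A.IsHermitian) (x : Fin s → ℝ) :
    (⨅ i, hA.eigenvalues i) * (x ⬝ᵥ x) ≤ x ⬝ᵥ A *ᵥ x := by
  set U : Matrix (Fin s) (Fin s) ℝ := (hA.eigenvectorUnitary : Matrix (Fin s) (Fin s) ℝ) with hU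
  have hstar : (star U : Matrix (Fin s) (Fin s) ℝ) = Uᵀ := by
    ext i j; simp [conjTranspose_apply]
  set y : Fin s → ℝ := x ᵥ* U with hy
  have hUU : U * star U = 1 := (Unitary.mem_iff.mp hA.eigenvectorUnitary.2).2
  have hnorm : y ⬝ᵥ y = x ⬝ᵥ x := by
    calc y ⬝ᵥ y = (x ᵥ* U) ⬝ᵥ (Uᵀ *ᵥ x) := by rw [hy, mulVec_transpose]
    _ = ((x ᵥ* U) ᵥ* Uᵀ) ⬝ᵥ x := dotProduct_mulVec _ _ _
    _ = (x ᵥ* (U * Uᵀ)) ⬝ᵥ x := by rw [vecMul_vecMul]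
    _ = x ⬝ᵥ x := by rw [← hstar, hUU, vecMul_one]
  have hAx : A *ᵥ x = U *ᵥ (diagonal (RCLike.ofReal ∘ hA.eigenvalues) *ᵥ y) := by
    conv_lhs => rw [hA.spectral_theorem, Unitary.conjStarAlgAut_apply]
    rw [← mulVec_mulVec, ← mulVec_mulVec, hstar, mulVec_transpose, ← hy, ← hU]
  have hquad : x ⬝ᵥ A *ᵥ x = ∑ i, hA.eigenvalues i * (y i * y i) := by
    rw [hAx, dotProduct_mulVec, ← hy]
    simp only [dotProduct, mulVec_diagonal, Function.comp_apply, RCLike.ofReal_real_eq_id, id_eq]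
    exact Finset.sum_congr rfl fun i _ => by ring
  rw [hquad, ← hnorm]
  simp only [dotProduct]
  rw [Finset.mul_sum]
  apply Finset.sum_le_sum
  intro i _
  have h1 : (⨅ i, hA.eigenvalues i) ≤ hA.eigenvalues i :=
    ciInf_le (Set.Finite.bddBelow (Set.finite_range _)) i
  nlinarith [mul_self_nonneg (y i)]

theorem stmt6 {n s : ℕ} (hn : 0 < n) (hs : 0 < s) (h : ℝ) (hh : 0 < h)
    (lam : ℝ) (hlam : 0 ≤ lam)
    (GS : Matrix (Fin n) (Fin s) ℝ) (Y : Fin n → ℝ)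
    (θbar θtilde : Fin s → ℝ)
    (hmin : ∀ θ : Fin s → ℝ,
      (1 / (n * h)) * sq2 (Y - GS.mulVec θbar) ≤ (1 / (n * h)) * sq2 (Y - GS.mulVec θ))
    (hKKT : (2 / (n * h)) * linf (GSᵀ.mulVec (Y - GS.mulVec θtilde)) ≤ lam)
    (hHerm : ((1 / ((n : ℝ) * h)) • (GSᵀ * GS)).IsHermitian)
    (μ : ℝ) (hμdef : μ = ⨅ i, hHerm.eigenvalues i) (hμ : 0 < μ) :
    l1 (θbar - θtilde) ≤ μ⁻¹ * lam * (s : ℝ) := by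
  have : Nonempty (Fin s) := ⟨⟨0, hs⟩⟩
  have hnh : (0:ℝ) < (n : ℝ) * h := by positivity
  have hnhne : ((n : ℝ) * h) ≠ 0 := ne_of_gt hnh
  set r : Fin n → ℝ := Y - GS.mulVec θbar with hr
  set v : Fin s → ℝ := GSᵀ.mulVec (Y - GS.mulVec θtilde) with hv
  -- normal equations
  have hkey : ∀ θ, sq2 (Y - GS.mulVec θbar) ≤ sq2 (Y - GS.mulVec θ) := fun θ =>
    (mul_le_mul_iff_right₀ (by positivity : (0:ℝ) < 1 / ((n:ℝ) * h))).mp (hmin θ)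
  have hnormal : GSᵀ.mulVec r = 0 := by
    funext j
    have H : ∀ t : ℝ, 0 ≤ (∑ i, (GS i j)^2) * t ^ 2 - 2 * ((GSᵀ.mulVec r) j) * t := by
      intro t
      have h2 := hkey (θbar + t • (Pi.single j 1 : Fin s → ℝ))
      have hsub : Y - GS.mulVec (θbar + t • (Pi.single j 1 : Fin s → ℝ))
          = fun i => r i - t * GS i j := by
        funext i
        have hg : (GS.mulVec (θbar + t • (Pi.single j 1 : Fin s → ℝ))) i
            = (GS.mulVec θbar) i + t * GS i j := by
          simp [mulVec_add, mulVec_smul, mulVec_single]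
        show Y i - _ = r i - t * GS i j
        rw [hg, hr]
        simp only [Pi.sub_apply]
        ring
      rw [hsub] at h2
      have hexp : sq2 (fun i => r i - t * GS i j)
          = sq2 r - 2 * t * ((GSᵀ.mulVec r) j) + t ^ 2 * ∑ i, (GS i j)^2 := by
        simp only [sq2, mulVec, dotProduct, transpose_apply, Finset.mul_sum]
        rw [← Finset.sum_sub_distrib, ← Finset.sum_add_distrib]
        exact Finset.sum_congr rfl fun i _ => by ring
      rw [hexp] at h2
      simp only [sq2] at h2 ⊢
      linarith
    have hb := quad_zero ((GSᵀ.mulVec r) j) (∑ i, (GS i j)^2)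
      (Finset.sum_nonneg fun i _ => sq_nonneg _) H
    simpa using hb
  -- KKT bound on each coordinate
  have hvj : ∀ j, |v j| ≤ lam * ((n:ℝ) * h) / 2 := by
    intro j
    have hle : |v j| ≤ linf v := by
      rw [linf]
      exact le_ciSup (Set.Finite.bddAbove (Set.finite_range fun i => |v i|)) j
    have h2 : 2 / ((n:ℝ) * h) * linf v ≤ lam := hKKT
    rw [div_mul_eq_mul_div, div_le_iff₀ hnh] at h2
    have hlinf : (0:ℝ) ≤ linf v := le_trans (abs_nonneg _) hle
    nlinarith
  set δ : Fin s → ℝ := θbar - θtilde with hδ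
  set A : Matrix (Fin s) (Fin s) ℝ := (1 / ((n : ℝ) * h)) • (GSᵀ * GS) with hA
  have hGv : (GSᵀ * GS).mulVec δ = v := by
    rw [← mulVec_mulVec]
    have : GS.mulVec δ = (Y - GS.mulVec θtilde) - (Y - GS.mulVec θbar) := by
      rw [hδ, mulVec_sub]; funext i; simp
    rw [this, mulVec_sub, ← hr, hnormal, ← hv, sub_zero]
  have hAδ : A.mulVec δ = (1 / ((n : ℝ) * h)) • v := by
    rw [hA, smul_mulVec, hGv]
  -- quadratic form bound
  have hquad : δ ⬝ᵥ A.mulVec δ ≤ lam / 2 * l1 δ := by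
    rw [hAδ]
    have : δ ⬝ᵥ ((1 / ((n : ℝ) * h)) • v) = (1 / ((n:ℝ)*h)) * ∑ j, δ j * v j := by
      simp [dotProduct, Finset.mul_sum]; ring_nf
      exact Finset.sum_congr rfl fun j _ => by ring
    rw [this]
    have hsum : ∑ j, δ j * v j ≤ l1 δ * (lam * ((n:ℝ)*h) / 2) := by
      rw [l1, Finset.sum_mul]
      apply Finset.sum_le_sum
      intro j _
      calc δ j * v j ≤ |δ j * v j| := le_abs_self _
      _ = |δ j| * |v j| := abs_mul _ _
      _ ≤ |δ j| * (lam * ((n:ℝ)*h) / 2) := by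
          exact mul_le_mul_of_nonneg_left (hvj j) (abs_nonneg _)
    calc (1 / ((n:ℝ)*h)) * ∑ j, δ j * v j
        ≤ (1 / ((n:ℝ)*h)) * (l1 δ * (lam * ((n:ℝ)*h) / 2)) :=
          mul_le_mul_of_nonneg_left hsum (by positivity)
    _ = lam / 2 * l1 δ := by field_simp
  -- Rayleigh bound
  have hray : μ * sq2 δ ≤ δ ⬝ᵥ A.mulVec δ := by
    have := rayleigh_lower A hHerm δ
    rw [← hμdef] at this
    have hdd : δ ⬝ᵥ δ = sq2 δ := by
      simp [dotProduct, sq2]; exact Finset.sum_congr rfl fun j _ => by ring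
    rwa [hdd] at this
  -- Cauchy–Schwarz
  have hCS : (l1 δ)^2 ≤ (s:ℝ) * sq2 δ := by
    have := sq_sum_le_card_mul_sum_sq (s := Finset.univ) (f := fun j => |δ j|)
    simpa [l1, sq2, sq_abs, Finset.card_univ] using this
  have hL : 0 ≤ l1 δ := Finset.sum_nonneg fun j _ => abs_nonneg _
  have hQ : 0 ≤ sq2 δ := Finset.sum_nonneg fun j _ => sq_nonneg _
  rcases eq_or_lt_of_le hL with hL0 | hLpos
  · rw [← hL0]; positivity
  · have h1 : μ * (l1 δ)^2 ≤ (s:ℝ) * (lam / 2 * l1 δ) := by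
      calc μ * (l1 δ)^2 ≤ μ * ((s:ℝ) * sq2 δ) := mul_le_mul_of_nonneg_left hCS (le_of_lt hμ)
      _ = (s:ℝ) * (μ * sq2 δ) := by ring
      _ ≤ (s:ℝ) * (lam / 2 * l1 δ) :=
          mul_le_mul_of_nonneg_left (le_trans hray hquad) (by positivity)
    have h2 : μ * l1 δ ≤ lam * (s:ℝ) := by nlinarith
    calc l1 δ = μ⁻¹ * (μ * l1 δ) := by field_simp
    _ ≤ μ⁻¹ * (lam * (s:ℝ)) := mul_le_mul_of_nonneg_left h2 (by positivity)
    _ = μ⁻¹ * lam * (s:ℝ) := by ring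
end
end
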